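/- Let A be a commutative ring, M an A-module, and d an element of the extended ordered set of Krull dimensions (WithBot ℕ∞). Then the set t = {m ∈ M | the Krull dimension of the quotient ring A / ann(A•m) is ≤ d}, where A•m denotes the cyclic submodule of M generated by m and ann(A•m) its annihilator ideal, is a submodule of M. Consequently, for a module over a polynomial ring in n variables, the sets t_r(M) = {m ∈ M | codimension of the cyclic submodule generated by m is > r} form a nested chain of submodules 0 = t_n(M) ⊆ t_{n-1}(M) ⊆ ... ⊆ t_0(M) ⊆ M. -/

import Mathlib

open Order

/-- Chain-transfer lemma: a chain of primes in `A ⧸ K` whose head pulls back to a prime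
containing `I` gives a bound by the dimension of `A ⧸ I`. -/
lemma aux_chain {A : Type*} [CommRing A] (K I : Ideal A)
    (p : LTSeries (PrimeSpectrum (A ⧸ K)))
    (h : I ≤ (p.head.asIdeal).comap (Ideal.Quotient.mk K)) :
    (p.length : WithBot ℕ∞) ≤ ringKrullDim (A ⧸ I) := by
  have hI : ∀ i, I ≤ ((p i).asIdeal).comap (Ideal.Quotient.mk K) := by
    intro i
    exact h.trans (Ideal.comap_mono ((PrimeSpectrum.asIdeal_le_asIdeal _ _).mpr
      (p.strictMono.monotone (Fin.zero_le i))))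
  have hker : RingHom.ker (Ideal.Quotient.mk I) = I := Ideal.mk_ker
  have hprime : ∀ i, (Ideal.map (Ideal.Quotient.mk I)
      (((p i).asIdeal).comap (Ideal.Quotient.mk K))).IsPrime := by
    intro i
    exact Ideal.map_isPrime_of_surjective Ideal.Quotient.mk_surjective (by rw [hker]; exact hI i)
  let q : LTSeries (PrimeSpectrum (A ⧸ I)) :=
    ⟨p.length,
     fun i => ⟨Ideal.map (Ideal.Quotient.mk I) (((p i).asIdeal).comap (Ideal.Quotient.mk K)),
       hprime i⟩,
     by
      intro i
      have hlt : (p i.castSucc).asIdeal < (p i.succ).asIdeal := p.step i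
      have hcomap : ((p i.castSucc).asIdeal).comap (Ideal.Quotient.mk K) <
          ((p i.succ).asIdeal).comap (Ideal.Quotient.mk K) :=
        (Ideal.orderEmbeddingOfSurjective _ Ideal.Quotient.mk_surjective).strictMono hlt
      refine lt_of_le_of_ne (Ideal.map_mono hcomap.le) ?_
      intro e
      apply hcomap.ne
      have := congrArg (fun P : Ideal (A ⧸ I) => Ideal.comap (Ideal.Quotient.mk I) P) e
      simp only at this
      rwa [Ideal.comap_map_of_surjective _ Ideal.Quotient.mk_surjective,
        Ideal.comap_map_of_surjective _ Ideal.Quotient.mk_surjective,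
        ← RingHom.ker_eq_comap_bot, hker, sup_eq_left.mpr (hI _), sup_eq_left.mpr (hI _)]
        at this⟩
  exact Order.LTSeries.length_le_krullDim q

lemma dim_quotient_inf_le {A : Type*} [CommRing A] (I J : Ideal A) :
    ringKrullDim (A ⧸ (I ⊓ J)) ≤ max (ringKrullDim (A ⧸ I)) (ringKrullDim (A ⧸ J)) := by
  refine iSup_le fun p => ?_
  have hle : I ⊓ J ≤ (p.head.asIdeal).comap (Ideal.Quotient.mk (I ⊓ J)) := by
    intro x hx
    simp only [Ideal.mem_comap, Ideal.Quotient.eq_zero_iff_mem.mpr hx]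
    exact (Ideal.Quotient.eq_zero_iff_mem.mpr hx) ▸ (p.head.asIdeal).zero_mem
  rcases (p.head.isPrime.comap (Ideal.Quotient.mk (I ⊓ J))).inf_le.mp hle with h | h
  · exact (aux_chain _ I p h).trans (le_max_left _ _)
  · exact (aux_chain _ J p h).trans (le_max_right _ _)

/-- Monotonicity of the dimension of a quotient. -/
lemma dim_quotient_antitone {A : Type*} [CommRing A] {I K : Ideal A} (h : I ≤ K) :
    ringKrullDim (A ⧸ K) ≤ ringKrullDim (A ⧸ I) :=
  ringKrullDim_le_of_surjective (Ideal.Quotient.factor h) (by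
    intro y
    obtain ⟨x, hx⟩ := Ideal.Quotient.mk_surjective y
    exact ⟨Ideal.Quotient.mk I x, by rw [Ideal.Quotient.factor_mk, hx]⟩)

/-- The main construction: for a suitable predicate `P` on dimensions, the set of `m` with
`P (dim A ⧸ ann (A • m))` is a submodule. -/
def dimSubmodule (A : Type*) [CommRing A] (M : Type*) [AddCommGroup M] [Module A M]
    (P : WithBot ℕ∞ → Prop) (hbot : P ⊥)
    (hmono : ∀ x y : WithBot ℕ∞, x ≤ y → P y → P x)
    (hmax : ∀ x y : WithBot ℕ∞, P x → P y → P (max x y)) : Submodule A M where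
  carrier := {m : M | P (ringKrullDim (A ⧸ (Submodule.span A {m}).annihilator))}
  zero_mem' := by
    have : (Submodule.span A ({0} : Set M)).annihilator = ⊤ := by
      rw [Submodule.span_zero_singleton, Submodule.annihilator_bot]
    haveI : Subsingleton (A ⧸ (Submodule.span A ({0} : Set M)).annihilator) :=
      Ideal.Quotient.subsingleton_iff.mpr this
    simpa [Set.mem_setOf_eq, ringKrullDim_eq_bot_of_subsingleton] using hbot
  add_mem' := by
    intro x y hx hy
    have hann : (Submodule.span A ({x} : Set M)).annihilator ⊓
        (Submodule.span A ({y} : Set M)).annihilator ≤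
        (Submodule.span A ({x + y} : Set M)).annihilator := by
      intro a ha
      rw [Submodule.mem_annihilator_span_singleton]
      have h1 : a • x = 0 := Submodule.mem_annihilator_span_singleton _ _ |>.mp ha.1
      have h2 : a • y = 0 := Submodule.mem_annihilator_span_singleton _ _ |>.mp ha.2
      rw [smul_add, h1, h2, add_zero]
    refine hmono _ _ ((dim_quotient_antitone hann).trans (dim_quotient_inf_le _ _))
      (hmax _ _ hx hy)
  smul_mem' := by
    intro a x hx
    have hspan : Submodule.span A ({a • x} : Set M) ≤ Submodule.span A ({x} : Set M) := by
      rw [Submodule.span_le, Set.singleton_subset_iff]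
      exact Submodule.smul_mem _ a (Submodule.mem_span_singleton_self x)
    exact hmono _ _ (dim_quotient_antitone (Submodule.annihilator_mono hspan)) hx

/-- (a) For any commutative ring `A`, any `A`-module `M` and any `d : WithBot ℕ∞`, the set
`{m ∈ M | Krull dimension of A ⧸ ann(A•m) ≤ d}` is a submodule of `M`.
(b) Consequently, for a module over a polynomial ring in `n` variables, the sets
`t_r(M) = {m | codim of the cyclic module A•m is > r}`, i.e.
`{m | Krull dim of A ⧸ ann(A•m) < n - r}`, form a nested chain of submodules
`0 = t_n(M) ⊆ t_{n-1}(M) ⊆ … ⊆ t_0(M) ⊆ M`. -/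
theorem dimension_filtration_is_submodule :
    (∀ (A : Type*) [CommRing A] (M : Type*) [AddCommGroup M] [Module A M] (d : WithBot ℕ∞),
      ∃ N : Submodule A M,
        (N : Set M) = {m : M | ringKrullDim (A ⧸ (Submodule.span A {m}).annihilator) ≤ d}) ∧
    (∀ (k : Type*) [Field k] (n : ℕ)
      (M : Type*) [AddCommGroup M] [Module (MvPolynomial (Fin n) k) M],
      ∃ t : ℕ → Submodule (MvPolynomial (Fin n) k) M,
        (∀ r : ℕ, (t r : Set M) = {m : M |
          ringKrullDim (MvPolynomial (Fin n) k ⧸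
            (Submodule.span (MvPolynomial (Fin n) k) {m}).annihilator) <
              ((n - r : ℕ) : WithBot ℕ∞)}) ∧
        t n = ⊥ ∧
        (∀ r s : ℕ, r ≤ s → t s ≤ t r)) := by
  constructor
  · intro A _ M _ _ d
    exact ⟨dimSubmodule A M (· ≤ d) bot_le (fun x y h1 h2 => h1.trans h2)
      (fun x y => max_le), rfl⟩
  · intro k _ n M _ _
    refine ⟨fun r => dimSubmodule _ M (· < ((n - r : ℕ) : WithBot ℕ∞))
      (WithBot.bot_lt_coe _) (fun x y h1 h2 => h1.trans_lt h2) (fun x y => max_lt),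
      fun r => rfl, ?_, ?_⟩
    · ext m
      simp only [Submodule.mem_bot]
      constructor
      · intro hm
        have hm' : ringKrullDim (MvPolynomial (Fin n) k ⧸
            (Submodule.span (MvPolynomial (Fin n) k) {m}).annihilator) <
            ((n - n : ℕ) : WithBot ℕ∞) := hm
        by_contra hne
        have hann : (Submodule.span (MvPolynomial (Fin n) k) ({m} : Set M)).annihilator ≠ ⊤ := by
          rw [Ne, Submodule.annihilator_eq_top_iff, Submodule.span_singleton_eq_bot]
          exact hne
        haveI := Ideal.Quotient.nontrivial_iff.mpr hann
        have h0 : (0 : WithBot ℕ∞) ≤ ringKrullDim (MvPolynomial (Fin n) k ⧸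
            (Submodule.span (MvPolynomial (Fin n) k) {m}).annihilator) :=
          ringKrullDim_nonneg_of_nontrivial
        rw [Nat.sub_self, Nat.cast_zero] at hm'
        exact absurd (h0.trans_lt hm') (lt_irrefl _)
      · intro hm
        subst hm
        show ringKrullDim _ < _
        have : (Submodule.span (MvPolynomial (Fin n) k) ({(0:M)} : Set M)).annihilator = ⊤ := by
          rw [Submodule.span_zero_singleton, Submodule.annihilator_bot]
        haveI : Subsingleton (MvPolynomial (Fin n) k ⧸
            (Submodule.span (MvPolynomial (Fin n) k) ({(0:M)} : Set M)).annihilator) :=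
          Ideal.Quotient.subsingleton_iff.mpr this
        rw [ringKrullDim_eq_bot_of_subsingleton]
        exact WithBot.bot_lt_coe _
    · intro r s hrs m hm
      have hm' : ringKrullDim (MvPolynomial (Fin n) k ⧸
          (Submodule.span (MvPolynomial (Fin n) k) {m}).annihilator) <
          ((n - s : ℕ) : WithBot ℕ∞) := hm
      show ringKrullDim _ < ((n - r : ℕ) : WithBot ℕ∞)
      refine hm'.trans_le ?_
      exact_mod_cast Nat.sub_le_sub_left hrs n
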